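/- If (A, M) and (A', M) are two configurations with the same feasible matching M (i.e. M is a feasible matching for both p-subsets A and A' of [p+q]), then A' can be obtained from A by the exchange operation with respect to some subset Π ⊆ M, namely A' = A △ (⋃_{π∈Π} π). -/

import Mathlib

open Finset

/-- The two-element set of endpoints of an arc `π = (i,j)`. -/
def arcSet (π : ℕ × ℕ) : Finset ℕ := {π.1, π.2}

/-- `M` is a feasible matching for the `p`-subset `A` of `[p+q] = {1,…,p+q}`:
`q` pairwise disjoint nested arcs `(i,j)`, `i<j`, each containing exactly one element
of `A` and one of its complement, with no free element covered by an arc's interval. -/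
def IsFeasibleMatching (p q : ℕ) (A : Finset ℕ) (M : Finset (ℕ × ℕ)) : Prop :=
  M.card = q ∧
  (∀ π ∈ M, 1 ≤ π.1 ∧ π.1 < π.2 ∧ π.2 ≤ p + q) ∧
  (∀ π ∈ M, ∀ π' ∈ M, π ≠ π' → Disjoint (arcSet π) (arcSet π')) ∧
  (∀ π ∈ M, (arcSet π ∩ A).card = 1 ∧
            (arcSet π ∩ (Finset.Icc 1 (p + q) \ A)).card = 1) ∧
  (∀ π ∈ M, ∀ π' ∈ M,
      Disjoint (Finset.Icc π.1 π.2) (Finset.Icc π'.1 π'.2) ∨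
      Finset.Icc π.1 π.2 ⊆ Finset.Icc π'.1 π'.2 ∨
      Finset.Icc π'.1 π'.2 ⊆ Finset.Icc π.1 π.2) ∧
  (∀ k ∈ Finset.Icc 1 (p + q), (∀ π ∈ M, k ∉ arcSet π) →
      ∀ π ∈ M, k ∉ Finset.Icc π.1 π.2)

open Classical in
/-- The number of members of the collection `𝒜` for which `M` is a feasible matching. -/
noncomputable def feasCount (p q : ℕ) (𝒜 : Finset (Finset ℕ)) (M : Finset (ℕ × ℕ)) : ℕ :=
  (𝒜.filter (fun A => IsFeasibleMatching p q A M)).card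

/-- Two collections of `p`-subsets of `[p+q]` are balanced if every matching is a
feasible matching for equally many members of each. -/
def BalancedPair (p q : ℕ) (𝒜 𝒜' : Finset (Finset ℕ)) : Prop :=
  ∀ M : Finset (ℕ × ℕ), feasCount p q 𝒜 M = feasCount p q 𝒜' M



lemma free_mem (p q : ℕ) (A : Finset ℕ) (M : Finset (ℕ × ℕ))
    (hA : A ⊆ Finset.Icc 1 (p + q)) (hAcard : A.card = p)
    (hM : IsFeasibleMatching p q A M) :
    Finset.Icc 1 (p + q) \ M.biUnion arcSet ⊆ A := by
  classical
  obtain ⟨hcard, hb, hdisj, hsplit, -, -⟩ := hM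
  set U := M.biUnion arcSet with hUdef
  have hUsub : U ⊆ Finset.Icc 1 (p + q) := by
    intro k hk
    simp only [hUdef, mem_biUnion] at hk
    obtain ⟨π, hπ, hkπ⟩ := hk
    obtain ⟨h1, h2, h3⟩ := hb π hπ
    simp only [arcSet, mem_insert, mem_singleton] at hkπ
    rcases hkπ with rfl | rfl <;> simp only [Finset.mem_Icc] <;> omega
  have hUcard : U.card = 2 * q := by
    rw [hUdef, card_biUnion hdisj]
    have : ∀ π ∈ M, (arcSet π).card = 2 := by
      intro π hπ
      obtain ⟨h1, h2, h3⟩ := hb π hπ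
      exact Finset.card_pair h2.ne
    rw [Finset.sum_congr rfl this, Finset.sum_const, hcard]; ring
  have hAU : (A ∩ U).card = q := by
    have he : A ∩ U = M.biUnion (fun π => arcSet π ∩ A) := by
      ext x
      simp only [mem_inter, hUdef, mem_biUnion]
      tauto
    rw [he, card_biUnion]
    · have : ∀ π ∈ M, (arcSet π ∩ A).card = 1 := fun π hπ => (hsplit π hπ).1
      rw [Finset.sum_congr rfl this, Finset.sum_const, hcard]; simp
    · intro π hπ π' hπ' hne
      exact (hdisj π hπ π' hπ' hne).mono inter_subset_left inter_subset_left
  have hIcc : (Finset.Icc 1 (p + q)).card = p + q := by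
    rw [Nat.card_Icc]; omega
  have hqp : 2 * q ≤ p + q := by
    rw [← hUcard, ← hIcc]; exact Finset.card_le_card hUsub
  have h1 : (A \ U).card = p - q := by
    have := Finset.card_sdiff_add_card_inter A U
    omega
  have h2 : (Finset.Icc 1 (p + q) \ U).card = p - q := by
    rw [Finset.card_sdiff_of_subset hUsub, hIcc, hUcard]; omega
  have hsub : A \ U ⊆ Finset.Icc 1 (p + q) \ U :=
    fun x hx => mem_sdiff.mpr ⟨hA (mem_sdiff.mp hx).1, (mem_sdiff.mp hx).2⟩
  have heq : A \ U = Finset.Icc 1 (p + q) \ U :=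
    Finset.eq_of_subset_of_card_le hsub (by omega)
  intro x hx
  exact (mem_sdiff.mp (heq ▸ hx)).1

/-- If `M` is a feasible matching for both `p`-subsets `A` and `A'` of `[p+q]`, then
`A'` is obtained from `A` by the exchange operation with respect to some `Π ⊆ M`. -/
theorem stmt4 (p q : ℕ) (A A' : Finset ℕ)
    (hA : A ⊆ Finset.Icc 1 (p + q)) (hAcard : A.card = p)
    (hA' : A' ⊆ Finset.Icc 1 (p + q)) (hA'card : A'.card = p)
    (M : Finset (ℕ × ℕ))
    (hM : IsFeasibleMatching p q A M) (hM' : IsFeasibleMatching p q A' M) :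
    ∃ Pset ⊆ M, A' = symmDiff A (Pset.biUnion arcSet) := by
  classical
  have hfreeA := free_mem p q A M hA hAcard hM
  have hfreeA' := free_mem p q A' M hA' hA'card hM'
  obtain ⟨hcard, hb, hdisj, hsplit, -, -⟩ := hM
  obtain ⟨-, -, -, hsplit', -, -⟩ := hM'
  set Pset := M.filter (fun π => arcSet π ∩ A ≠ arcSet π ∩ A') with hPdef
  refine ⟨Pset, filter_subset _ _, ?_⟩
  ext k
  rw [Finset.mem_symmDiff]
  by_cases hkI : k ∈ Finset.Icc 1 (p + q)
  · by_cases hkU : ∃ π ∈ M, k ∈ arcSet π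
    · obtain ⟨π, hπ, hkπ⟩ := hkU
      have h1 := (hsplit π hπ).1
      have h1' := (hsplit' π hπ).1
      have harc2 : (arcSet π).card = 2 := by
        obtain ⟨-, h2, -⟩ := hb π hπ
        exact Finset.card_pair h2.ne
      have hknot : ∀ π' ∈ M, π' ≠ π → k ∉ arcSet π' := by
        intro π' hπ' hne hk'
        exact (Finset.disjoint_left.mp (hdisj π' hπ' π hπ hne)) hk' hkπ
      by_cases hPi : arcSet π ∩ A = arcSet π ∩ A'
      · have hkS : k ∉ Pset.biUnion arcSet := by
          simp only [mem_biUnion, not_exists, not_and]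
          intro π' hπ'
          rw [hPdef, mem_filter] at hπ'
          by_cases hne : π' = π
          · subst hne; exact fun _ => hπ'.2 hPi
          · exact fun h => hknot π' hπ'.1 hne h

        have hAA' : k ∈ A ↔ k ∈ A' := by
          constructor <;> intro h
          · exact (mem_inter.mp (hPi ▸ mem_inter.mpr ⟨hkπ, h⟩)).2
          · exact (mem_inter.mp (hPi.symm ▸ mem_inter.mpr ⟨hkπ, h⟩)).2
        simp only [hkS]
        tauto
      · have hkS : k ∈ Pset.biUnion arcSet :=
          mem_biUnion.mpr ⟨π, by rw [hPdef, mem_filter]; exact ⟨hπ, hPi⟩, hkπ⟩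
        have hxor : k ∈ A ↔ k ∉ A' := by
          constructor
          · intro h h'
            have e1 : ({k} : Finset ℕ) = arcSet π ∩ A :=
              Finset.eq_of_subset_of_card_le
                (singleton_subset_iff.mpr (mem_inter.mpr ⟨hkπ, h⟩)) (by simp [h1])
            have e2 : ({k} : Finset ℕ) = arcSet π ∩ A' :=
              Finset.eq_of_subset_of_card_le
                (singleton_subset_iff.mpr (mem_inter.mpr ⟨hkπ, h'⟩)) (by simp [h1'])
            exact hPi (e1 ▸ e2 ▸ rfl)
          · intro h'
            by_contra h
            have hd : ({k} : Finset ℕ) ⊆ arcSet π := singleton_subset_iff.mpr hkπ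
            have hc : (arcSet π \ {k}).card = 1 := by
              rw [Finset.card_sdiff_of_subset hd, harc2, Finset.card_singleton]
            have e1 : arcSet π ∩ A = arcSet π \ {k} := by
              apply Finset.eq_of_subset_of_card_le _ (by omega)
              intro x hx
              rw [mem_inter] at hx
              rw [mem_sdiff, mem_singleton]
              exact ⟨hx.1, fun he => h (he ▸ hx.2)⟩
            have e2 : arcSet π ∩ A' = arcSet π \ {k} := by
              apply Finset.eq_of_subset_of_card_le _ (by omega)
              intro x hx
              rw [mem_inter] at hx
              rw [mem_sdiff, mem_singleton]
              exact ⟨hx.1, fun he => h' (he ▸ hx.2)⟩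
            exact hPi (e1.trans e2.symm)
        simp only [hkS]
        tauto
    · push_neg at hkU
      have hkA : k ∈ A := hfreeA (mem_sdiff.mpr ⟨hkI, by
        simp only [mem_biUnion, not_exists, not_and]; exact hkU⟩)
      have hkA' : k ∈ A' := hfreeA' (mem_sdiff.mpr ⟨hkI, by
        simp only [mem_biUnion, not_exists, not_and]; exact hkU⟩)
      have hkS : k ∉ Pset.biUnion arcSet := by
        simp only [mem_biUnion, not_exists, not_and]
        exact fun π hπ => hkU π (mem_of_mem_filter _ hπ)
      simp [hkA, hkA', hkS]
  · have hkA : k ∉ A := fun h => hkI (hA h)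
    have hkA' : k ∉ A' := fun h => hkI (hA' h)
    have hkS : k ∉ Pset.biUnion arcSet := by
      simp only [mem_biUnion, not_exists, not_and]
      intro π hπ hk
      rw [hPdef, mem_filter] at hπ
      obtain ⟨h1, h2, h3⟩ := hb π hπ.1
      simp only [arcSet, mem_insert, mem_singleton] at hk
      rw [Finset.mem_Icc] at hkI
      rcases hk with rfl | rfl <;> omega
    simp [hkA, hkA', hkS]
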